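/- Let A₁ > 0 and A₂ ≠ 0 be integers with gcd(A₁,A₂) = 1 and A₁ + A₂ ≡ 0 (mod 4). Then S(A₁,A₂) consists precisely of the tuples (B₁, C₁, B₂, C₂) with C₁ = −(A₁C₂ + 4B₁B₂)/A₂, where: (i) 0 ≤ B₁ < A₁ and gcd(B₁,A₁) = 1; (ii) 0 ≤ sign(A₂)·B₂ < |A₂| and gcd(B₂,A₂) = 1; (iii) C₂ is an integer with A₁C₂ ≡ −4B₁B₂ (mod A₂), C₂ ≡ −1 (mod 4), and 0 ≤ sign(A₂)·C₂ < 4|A₂|. In particular, the cardinality of S(A₁,A₂) equals φ(A₁)·φ(|A₂|). -/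

import Mathlib

/-- The set `S(A₁,A₂)` of normalized tuples `(B₁,C₁,B₂,C₂)` satisfying
`A₁C₂ + 4B₁B₂ + C₁A₂ = 0`, the gcd conditions, `Cᵢ ≡ -1 (mod 4)` and the
normalization inequalities. -/
def PlSet (A₁ A₂ : ℤ) : Set (ℤ × ℤ × ℤ × ℤ) :=
  {v | A₁ * v.2.2.2 + 4 * v.1 * v.2.2.1 + v.2.1 * A₂ = 0 ∧
    Int.gcd A₁ (Int.gcd v.1 v.2.1) = 1 ∧
    Int.gcd A₂ (Int.gcd v.2.2.1 v.2.2.2) = 1 ∧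
    v.2.1 ≡ -1 [ZMOD 4] ∧ v.2.2.2 ≡ -1 [ZMOD 4] ∧
    0 ≤ (v.1 : ℚ) / (A₁ : ℚ) ∧ (v.1 : ℚ) / (A₁ : ℚ) < 1 ∧
    0 ≤ (v.2.2.1 : ℚ) / (A₂ : ℚ) ∧ (v.2.2.1 : ℚ) / (A₂ : ℚ) < 1 ∧
    0 ≤ (v.2.2.2 : ℚ) / (4 * (A₂ : ℚ)) ∧ (v.2.2.2 : ℚ) / (4 * (A₂ : ℚ)) < 1}

lemma div_range_iff (a A : ℤ) (hA : A ≠ 0) :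
    (0 ≤ (a:ℚ)/(A:ℚ) ∧ (a:ℚ)/(A:ℚ) < 1) ↔ (0 ≤ A.sign * a ∧ A.sign * a < |A|) := by
  rcases hA.lt_or_gt with h | h
  · rw [Int.sign_eq_neg_one_of_neg h, abs_of_neg h]
    have hAQ : (A:ℚ) < 0 := by exact_mod_cast h
    rw [le_div_iff_of_neg hAQ, div_lt_iff_of_neg hAQ]
    constructor
    · rintro ⟨h1, h2⟩
      have h1' : a ≤ 0 := by exact_mod_cast (by linarith : (a:ℚ) ≤ 0)
      have h2' : A < a := by exact_mod_cast (by linarith : (A:ℚ) < (a:ℚ))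
      constructor <;> linarith
    · rintro ⟨h1, h2⟩
      have h1' : (a:ℚ) ≤ 0 := by exact_mod_cast (by linarith : a ≤ 0)
      have h2' : (A:ℚ) < a := by exact_mod_cast (by linarith : A < a)
      constructor <;> linarith
  · rw [Int.sign_eq_one_of_pos h, abs_of_pos h, one_mul]
    have hAQ : (0:ℚ) < (A:ℚ) := by exact_mod_cast h
    rw [le_div_iff₀ hAQ, div_lt_one hAQ, zero_mul]
    exact ⟨fun ⟨h1,h2⟩ => ⟨by exact_mod_cast h1, by exact_mod_cast h2⟩,
      fun ⟨h1,h2⟩ => ⟨by exact_mod_cast h1, by exact_mod_cast h2⟩⟩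

lemma isCoprime_four_of_odd (A : ℤ) (h : ¬ (2:ℤ) ∣ A) : IsCoprime (4:ℤ) A := by
  have h2 : IsCoprime (2:ℤ) A := (Int.prime_two.coprime_iff_not_dvd).mpr h
  have h4 : IsCoprime ((2:ℤ)*2) A := h2.mul_left h2
  norm_num at h4
  exact h4

lemma plset_mem_iff (A₁ A₂ : ℤ) (hA₁ : 0 < A₁) (hA₂ : A₂ ≠ 0)
    (hcop : Int.gcd A₁ A₂ = 1) (hmod : A₁ + A₂ ≡ 0 [ZMOD 4]) (B₁ C₁ B₂ C₂ : ℤ) :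
    (B₁, C₁, B₂, C₂) ∈ PlSet A₁ A₂ ↔
      (C₁ * A₂ = -(A₁ * C₂ + 4 * B₁ * B₂) ∧
       0 ≤ B₁ ∧ B₁ < A₁ ∧ Int.gcd B₁ A₁ = 1 ∧
       0 ≤ A₂.sign * B₂ ∧ A₂.sign * B₂ < |A₂| ∧ Int.gcd B₂ A₂ = 1 ∧
       A₁ * C₂ ≡ -(4 * B₁ * B₂) [ZMOD A₂] ∧ C₂ ≡ -1 [ZMOD 4] ∧
       0 ≤ A₂.sign * C₂ ∧ A₂.sign * C₂ < 4 * |A₂|) := by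
  have h4 : (4:ℤ) ∣ A₁ + A₂ := (Int.modEq_zero_iff_dvd).mp hmod
  have hodd1 : ¬ (2:ℤ) ∣ A₁ := by
    intro h2
    have h2' : (2:ℤ) ∣ A₂ := by omega
    have : (2:ℤ) ∣ (Int.gcd A₁ A₂ : ℤ) := Int.dvd_coe_gcd h2 h2'
    rw [hcop] at this
    norm_num at this
  have hodd2 : ¬ (2:ℤ) ∣ A₂ := by
    intro h2
    have h2' : (2:ℤ) ∣ A₁ := by omega
    exact hodd1 h2'
  have hcopI : IsCoprime (A₁:ℤ) A₂ := Int.isCoprime_iff_gcd_eq_one.mpr hcop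
  have hcop41 : IsCoprime (4:ℤ) A₁ := isCoprime_four_of_odd A₁ hodd1
  have hcop42 : IsCoprime (4:ℤ) A₂ := isCoprime_four_of_odd A₂ hodd2
  have hs1 : A₁.sign = 1 := Int.sign_eq_one_of_pos hA₁
  have habs1 : |A₁| = A₁ := abs_of_pos hA₁
  have h4A₂ : 4 * A₂ ≠ 0 := by simpa using hA₂
  have hsign4 : (4 * A₂).sign = A₂.sign := by
    rw [Int.sign_mul, Int.sign_eq_one_of_pos (by norm_num : (0:ℤ) < 4), one_mul]
  have habs4 : |4 * A₂| = 4 * |A₂| := by rw [abs_mul]; norm_num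
  have hcastC : ∀ c : ℤ, ((c:ℚ)) / (4 * (A₂:ℚ)) = (c:ℚ) / (((4*A₂ : ℤ)):ℚ) := by
    intro c; push_cast; ring_nf
  constructor
  · rintro ⟨heq, hg1, hg2, hc1, hc2, hb1a, hb1b, hb2a, hb2b, hc2a, hc2b⟩
    have hrB₁ := (div_range_iff B₁ A₁ hA₁.ne').mp ⟨hb1a, hb1b⟩
    rw [hs1, one_mul, habs1] at hrB₁
    have hrB₂ := (div_range_iff B₂ A₂ hA₂).mp ⟨hb2a, hb2b⟩
    have hrC₂ := (div_range_iff C₂ (4*A₂) h4A₂).mp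
      ⟨by rw [← hcastC]; exact hc2a, by rw [← hcastC]; exact hc2b⟩
    rw [hsign4, habs4] at hrC₂
    have hgB₁ : Int.gcd B₁ A₁ = 1 := by
      set d := Int.gcd B₁ A₁ with hd
      have hdB : (d:ℤ) ∣ B₁ := Int.gcd_dvd_left _ _
      have hdA : (d:ℤ) ∣ A₁ := Int.gcd_dvd_right _ _
      have hdm : (d:ℤ) ∣ C₁ * A₂ := by
        have : C₁ * A₂ = -(A₁*C₂) - 4*(B₁*B₂) := by linarith
        rw [this]
        exact dvd_sub ((hdA.mul_right C₂).neg_right) ((hdB.mul_right B₂).mul_left 4)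
      have hdc : IsCoprime ((d:ℤ)) A₂ := hcopI.of_isCoprime_of_dvd_left hdA
      have hdC₁ : (d:ℤ) ∣ C₁ := hdc.dvd_of_dvd_mul_right hdm
      have : (d:ℤ) ∣ (Int.gcd A₁ (Int.gcd B₁ C₁ : ℤ) : ℤ) :=
        Int.dvd_coe_gcd hdA (Int.dvd_coe_gcd hdB hdC₁)
      rw [hg1] at this
      exact Nat.dvd_one.mp (by exact_mod_cast this)
    have hgB₂ : Int.gcd B₂ A₂ = 1 := by
      set d := Int.gcd B₂ A₂ with hd
      have hdB : (d:ℤ) ∣ B₂ := Int.gcd_dvd_left _ _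
      have hdA : (d:ℤ) ∣ A₂ := Int.gcd_dvd_right _ _
      have hdm : (d:ℤ) ∣ A₁ * C₂ := by
        have : A₁ * C₂ = -(C₁*A₂) - 4*(B₁*B₂) := by linarith
        rw [this]
        exact dvd_sub ((hdA.mul_left C₁).neg_right) ((hdB.mul_left B₁).mul_left 4)
      have hdc : IsCoprime ((d:ℤ)) A₁ := (hcopI.symm).of_isCoprime_of_dvd_left hdA
      have hdC₂ : (d:ℤ) ∣ C₂ := hdc.dvd_of_dvd_mul_left hdm
      have : (d:ℤ) ∣ (Int.gcd A₂ (Int.gcd B₂ C₂ : ℤ) : ℤ) :=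
        Int.dvd_coe_gcd hdA (Int.dvd_coe_gcd hdB hdC₂)
      rw [hg2] at this
      exact Nat.dvd_one.mp (by exact_mod_cast this)
    refine ⟨by linarith, hrB₁.1, hrB₁.2, hgB₁, hrB₂.1, hrB₂.2, hgB₂, ?_, hc2, hrC₂.1, hrC₂.2⟩
    rw [Int.modEq_iff_dvd]
    exact ⟨C₁, by linarith⟩
  · rintro ⟨ha, hb, hc, hd, he, hf, hg, hh, hi, hj, hk⟩
    have hC₁mod : C₁ ≡ -1 [ZMOD 4] := by
      obtain ⟨k, hkk⟩ := h4
      obtain ⟨m, hmm⟩ := (Int.modEq_iff_dvd).mp hi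
      rw [Int.modEq_iff_dvd]
      have hdvd : (4:ℤ) ∣ A₁ * (-1 - C₁) := by
        refine ⟨A₁*m - B₁*B₂ - k*C₁, ?_⟩
        linear_combination ha - C₁ * hkk + A₁ * hmm
      exact hcop41.dvd_of_dvd_mul_left hdvd
    refine ⟨by linarith, ?_, ?_, hC₁mod, hi, ?_⟩
    · set d := Int.gcd A₁ (Int.gcd B₁ C₁ : ℤ) with hdd
      have h1 : (d:ℤ) ∣ A₁ := Int.gcd_dvd_left _ _
      have h2 : (d:ℤ) ∣ (Int.gcd B₁ C₁ : ℤ) := Int.gcd_dvd_right _ _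
      have h3 : (d:ℤ) ∣ B₁ := h2.trans (Int.gcd_dvd_left _ _)
      have : (d:ℤ) ∣ (Int.gcd B₁ A₁ : ℤ) := Int.dvd_coe_gcd h3 h1
      rw [hd] at this
      exact Nat.dvd_one.mp (by exact_mod_cast this)
    · set d := Int.gcd A₂ (Int.gcd B₂ C₂ : ℤ) with hdd
      have h1 : (d:ℤ) ∣ A₂ := Int.gcd_dvd_left _ _
      have h2 : (d:ℤ) ∣ (Int.gcd B₂ C₂ : ℤ) := Int.gcd_dvd_right _ _
      have h3 : (d:ℤ) ∣ B₂ := h2.trans (Int.gcd_dvd_left _ _)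
      have : (d:ℤ) ∣ (Int.gcd B₂ A₂ : ℤ) := Int.dvd_coe_gcd h3 h1
      rw [hg] at this
      exact Nat.dvd_one.mp (by exact_mod_cast this)
    · have hrB₁ := (div_range_iff B₁ A₁ hA₁.ne').mpr (by rw [hs1, one_mul, habs1]; exact ⟨hb, hc⟩)
      have hrB₂ := (div_range_iff B₂ A₂ hA₂).mpr ⟨he, hf⟩
      have hrC₂ := (div_range_iff C₂ (4*A₂) h4A₂).mpr (by rw [hsign4, habs4]; exact ⟨hj, hk⟩)
      refine ⟨hrB₁.1, hrB₁.2, hrB₂.1, hrB₂.2, ?_, ?_⟩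
      · rw [hcastC]; exact hrC₂.1
      · rw [hcastC]; exact hrC₂.2

def S2 (A : ℤ) : Set ℤ := {b | 0 ≤ A.sign * b ∧ A.sign * b < |A| ∧ Int.gcd b A = 1}

lemma card_S2 (A : ℤ) (hA : A ≠ 0) : Nat.card (S2 A) = A.natAbs.totient := by
  have hss : A.sign * A.sign = 1 := by
    rcases hA.lt_or_gt with h | h <;>
      simp [Int.sign_eq_neg_one_of_neg, Int.sign_eq_one_of_pos, h]
  have habs : |A| = (A.natAbs : ℤ) := Int.abs_eq_natAbs A
  have hsa : A.sign.natAbs = 1 := Int.natAbs_sign_of_ne_zero hA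
  rw [Nat.totient_eq_card_lt_and_coprime]
  apply Nat.card_congr
  refine ⟨fun b => ⟨(A.sign * b.1).toNat, ?_, ?_⟩, fun m => ⟨A.sign * (m.1 : ℤ), ?_, ?_, ?_⟩, ?_, ?_⟩
  · obtain ⟨b, h1, h2, h3⟩ := b
    show (A.sign * b).toNat < A.natAbs
    simp only [habs] at h2
    omega
  · obtain ⟨b, h1, h2, h3⟩ := b
    show A.natAbs.Coprime (A.sign * b).toNat
    have hbn : (A.sign * b).toNat = b.natAbs := by
      have h5 : (A.sign * b).natAbs = b.natAbs := by rw [Int.natAbs_mul, hsa, one_mul]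
      omega
    rw [hbn]
    rw [Int.gcd] at h3
    exact Nat.coprime_comm.mp h3
  · obtain ⟨m, h1, h2⟩ := m
    rw [← mul_assoc, hss, one_mul]
    positivity
  · obtain ⟨m, h1, h2⟩ := m
    rw [← mul_assoc, hss, one_mul, habs]
    exact_mod_cast h1
  · obtain ⟨m, h1, h2⟩ := m
    rw [Int.gcd, Int.natAbs_mul, hsa, one_mul, Int.natAbs_natCast]
    exact Nat.coprime_comm.mp h2
  · rintro ⟨b, h1, h2, h3⟩
    ext
    simp only
    rw [Int.toNat_of_nonneg h1, ← mul_assoc, hss, one_mul]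
  · rintro ⟨m, h1, h2⟩
    ext
    simp only
    rw [← mul_assoc, hss, one_mul, Int.toNat_natCast]

/-- Explicit description of `S(A₁,A₂)` for coprime `A₁,A₂`, and its cardinality
`φ(A₁)φ(|A₂|)`. -/
theorem plset_coprime_description (A₁ A₂ : ℤ) (hA₁ : 0 < A₁) (hA₂ : A₂ ≠ 0)
    (hcop : Int.gcd A₁ A₂ = 1) (hmod : A₁ + A₂ ≡ 0 [ZMOD 4]) :
    (∀ B₁ C₁ B₂ C₂ : ℤ, (B₁, C₁, B₂, C₂) ∈ PlSet A₁ A₂ ↔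
      (C₁ * A₂ = -(A₁ * C₂ + 4 * B₁ * B₂) ∧
       0 ≤ B₁ ∧ B₁ < A₁ ∧ Int.gcd B₁ A₁ = 1 ∧
       0 ≤ A₂.sign * B₂ ∧ A₂.sign * B₂ < |A₂| ∧ Int.gcd B₂ A₂ = 1 ∧
       A₁ * C₂ ≡ -(4 * B₁ * B₂) [ZMOD A₂] ∧ C₂ ≡ -1 [ZMOD 4] ∧
       0 ≤ A₂.sign * C₂ ∧ A₂.sign * C₂ < 4 * |A₂|)) ∧
    Nat.card ↥(PlSet A₁ A₂) = Nat.totient A₁.natAbs * Nat.totient A₂.natAbs := by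
  have hmem := plset_mem_iff A₁ A₂ hA₁ hA₂ hcop hmod
  refine ⟨hmem, ?_⟩
  have h4 : (4:ℤ) ∣ A₁ + A₂ := (Int.modEq_zero_iff_dvd).mp hmod
  have hodd1 : ¬ (2:ℤ) ∣ A₁ := by
    intro h2
    have h2' : (2:ℤ) ∣ A₂ := by omega
    have : (2:ℤ) ∣ (Int.gcd A₁ A₂ : ℤ) := Int.dvd_coe_gcd h2 h2'
    rw [hcop] at this
    norm_num at this
  have hodd2 : ¬ (2:ℤ) ∣ A₂ := fun h2 => hodd1 (by omega)
  have hcopI : IsCoprime (A₁:ℤ) A₂ := Int.isCoprime_iff_gcd_eq_one.mpr hcop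
  have hcop42 : IsCoprime (4:ℤ) A₂ := isCoprime_four_of_odd A₂ hodd2
  have hs1 : A₁.sign = 1 := Int.sign_eq_one_of_pos hA₁
  have habs1 : |A₁| = A₁ := abs_of_pos hA₁
  have hss : A₂.sign * A₂.sign = 1 := by
    rcases hA₂.lt_or_gt with h | h <;>
      simp [Int.sign_eq_neg_one_of_neg, Int.sign_eq_one_of_pos, h]
  have habs2 : |A₂| = (A₂.natAbs : ℤ) := Int.abs_eq_natAbs A₂
  have hbij : ∃ f : ↥(PlSet A₁ A₂) → ↥(S2 A₁) × ↥(S2 A₂), Function.Bijective f := by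
    refine ⟨fun v => (⟨v.1.1, ?_⟩, ⟨v.1.2.2.1, ?_⟩), ?_, ?_⟩
    · obtain ⟨hva, hvb, hvc, hvd, hve, hvf, hvg, hvh, hvi, hvj, hvk⟩ :=
        (hmem v.1.1 v.1.2.1 v.1.2.2.1 v.1.2.2.2).mp v.2
      exact ⟨by rw [hs1, one_mul]; exact hvb, by rw [hs1, one_mul, habs1]; exact hvc, hvd⟩
    · obtain ⟨hva, hvb, hvc, hvd, hve, hvf, hvg, hvh, hvi, hvj, hvk⟩ :=
        (hmem v.1.1 v.1.2.1 v.1.2.2.1 v.1.2.2.2).mp v.2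
      exact ⟨hve, hvf, hvg⟩
    · -- injective
      rintro ⟨⟨b1, c1, b2, c2⟩, hv⟩ ⟨⟨b1', c1', b2', c2'⟩, hw⟩ hfeq
      simp only [Prod.mk.injEq, Subtype.mk.injEq] at hfeq
      obtain ⟨e1, e2⟩ := hfeq
      subst e1; subst e2
      obtain ⟨hva, hvb, hvc, hvd, hve, hvf, hvg, hvh, hvi, hvj, hvk⟩ :=
        (hmem b1 c1 b2 c2).mp hv
      obtain ⟨hwa, hwb, hwc, hwd, hwe, hwf, hwg, hwh, hwi, hwj, hwk⟩ :=
        (hmem b1 c1' b2 c2').mp hw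
      have hmodA : A₂ ∣ c2' - c2 := by
        have ht : A₁ * c2 ≡ A₁ * c2' [ZMOD A₂] := hvh.trans hwh.symm
        have hdvd : A₂ ∣ A₁ * c2' - A₁ * c2 := (Int.modEq_iff_dvd).mp ht
        have hdvd' : A₂ ∣ A₁ * (c2' - c2) := by rw [mul_sub]; exact hdvd
        exact (hcopI.symm).dvd_of_dvd_mul_left hdvd'
      have hmod4 : (4:ℤ) ∣ c2' - c2 := by
        have h1 := (Int.modEq_iff_dvd).mp hvi
        have h2 := (Int.modEq_iff_dvd).mp hwi
        omega
      have hdvd42 : 4 * A₂ ∣ c2' - c2 := hcop42.mul_dvd hmod4 hmodA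
      have hz : c2' - c2 = 0 := by
        apply Int.eq_zero_of_dvd_of_natAbs_lt_natAbs hdvd42
        rcases hA₂.lt_or_gt with h | h
        · rw [Int.sign_eq_neg_one_of_neg h] at hvj hvk hwj hwk
          rw [abs_of_neg h] at hvk hwk
          omega
        · rw [Int.sign_eq_one_of_pos h] at hvj hvk hwj hwk
          rw [abs_of_pos h] at hvk hwk
          omega
      have hc2 : c2 = c2' := by omega
      subst hc2
      have hc1 : c1 = c1' := by
        have : c1 * A₂ = c1' * A₂ := by rw [hva, hwa]
        exact mul_right_cancel₀ hA₂ this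
      subst hc1
      rfl
    · -- surjective
      rintro ⟨⟨b1, hb1a, hb1b, hb1c⟩, ⟨b2, hb2a, hb2b, hb2c⟩⟩
      rw [hs1, one_mul] at hb1a hb1b
      rw [habs1] at hb1b
      obtain ⟨u, vv, huv⟩ := hcopI
      obtain ⟨s, t, hst⟩ := hcop42
      have hex : ∃ c : ℤ, (4:ℤ) ∣ (-1 - c) ∧ A₂ ∣ (-(4*b1*b2) - A₁*c) := by
        refine ⟨(u * (-(4*b1*b2))) * (s*4) - t*A₂, ⟨-(s*(u * (-(4*b1*b2)))) - s, ?_⟩,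
          ⟨-(4*b1*b2)*t + vv*(-(4*b1*b2))*(4*s) + A₁*t, ?_⟩⟩
        · linear_combination hst
        · linear_combination (-4*s*(-(4*b1*b2))) * huv - (-(4*b1*b2)) * hst
      obtain ⟨c, hc4, hcA⟩ := hex
      have hmpos : (0:ℤ) < 4 * |A₂| := by positivity
      set q : ℤ := (A₂.sign * c) / (4 * |A₂|) with hq
      set r : ℤ := (A₂.sign * c) % (4 * |A₂|) with hr
      have hr0 : 0 ≤ r := Int.emod_nonneg _ hmpos.ne'
      have hr1 : r < 4 * |A₂| := Int.emod_lt_of_pos _ hmpos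
      have hrdef : r = A₂.sign * c - (4 * |A₂|) * q := by
        rw [hr, hq, Int.emod_def]
      set C₂ : ℤ := A₂.sign * r with hC₂
      have hsm : A₂.sign * (4 * |A₂|) = 4 * A₂ := by
        rw [show A₂.sign * (4 * |A₂|) = 4 * (A₂.sign * |A₂|) by ring, Int.sign_mul_abs]
      have hsC₂ : A₂.sign * C₂ = r := by rw [hC₂, ← mul_assoc, hss, one_mul]
      have hdiff : 4 * A₂ ∣ C₂ - c := by
        refine ⟨-q, ?_⟩
        rw [hC₂]
        linear_combination A₂.sign * hrdef + c * hss - q * hsm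
      have hC₂4 : (4:ℤ) ∣ -1 - C₂ := by
        have h1 : (4:ℤ) ∣ C₂ - c := dvd_trans ⟨A₂, rfl⟩ hdiff
        omega
      have hC₂A : A₂ ∣ -(4*b1*b2) - A₁*C₂ := by
        have h1 : A₂ ∣ C₂ - c := dvd_trans ⟨4, by ring⟩ hdiff
        obtain ⟨x, hx⟩ := h1
        obtain ⟨y, hy⟩ := hcA
        exact ⟨y - A₁*x, by linear_combination hy - A₁*hx⟩
      obtain ⟨w, hw⟩ := hC₂A
      have hmemv : (b1, w, b2, C₂) ∈ PlSet A₁ A₂ := by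
        apply (hmem b1 w b2 C₂).mpr
        refine ⟨by linear_combination -hw, hb1a, hb1b, hb1c, hb2a, hb2b, hb2c, ?_, ?_, ?_, ?_⟩
        · rw [Int.modEq_iff_dvd]
          exact ⟨w, hw⟩
        · rw [Int.modEq_iff_dvd]
          exact hC₂4
        · rw [hsC₂]; exact hr0
        · rw [hsC₂]; exact hr1
      exact ⟨⟨(b1, w, b2, C₂), hmemv⟩, rfl⟩
  obtain ⟨f, hf⟩ := hbij
  rw [Nat.card_eq_of_bijective f hf, Nat.card_prod, card_S2 A₁ hA₁.ne', card_S2 A₂ hA₂]
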